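/- Let A and B be closed subsets of a complete metric space X and let x̄ ∈ X. If A and B have property (T) at x̄, then there exist K > 0 and δ > 0 such that d(x, A ∩ B) ≤ K(d(x, A) + d(x, B)) for all x in the open ball B_δ(x̄). -/

import Mathlib

open Metric Set
open scoped ENNReal
open scoped Topology

/-- Property (T) of closed sets `A`, `B` at a point `x0` with constants `δ > 0`, `M > 0`. -/
def PropT {X : Type*} [MetricSpace X] (A B : Set X) (x0 : X) (δ M : ℝ) : Prop :=
  (A ∩ Metric.ball x0 (δ / (2 * (1 + 2 * M)))).Nonempty ∧
  (B ∩ Metric.ball x0 (δ / (2 * (1 + 2 * M)))).Nonempty ∧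
  ∀ xA ∈ A ∩ Metric.closedBall x0 δ, ∀ xB ∈ B ∩ Metric.closedBall x0 δ, xA ≠ xB →
    ∃ θ > 0, ∃ xA' ∈ A, ∃ xB' ∈ B,
      dist xA xA' ≤ θ * M ∧ dist xB xB' ≤ θ * M ∧ dist xA' xB' ≤ dist xA xB - θ

open Filter in
lemma core_lemma {X : Type*} [MetricSpace X] [CompleteSpace X]
    {A B : Set X} (hA : IsClosed A) (hB : IsClosed B) (xbar : X)
    {δ M : ℝ} (hδ : 0 < δ) (hM : 0 < M) (hT : PropT A B xbar δ M)
    {a b : X} (ha : a ∈ A) (hb : b ∈ B)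
    (hca : dist xbar a + 2 * M * dist a b ≤ δ)
    (hcb : dist xbar b + 2 * M * dist a b ≤ δ) :
    ∃ z ∈ A ∩ B, dist a z ≤ 2 * M * dist a b := by
  classical
  set S : X → X → Set ℝ := fun u v =>
    {θ | 0 < θ ∧ ∃ u' ∈ A, ∃ v' ∈ B,
      dist u u' ≤ 2 * M * θ ∧ dist v v' ≤ 2 * M * θ ∧ dist u' v' ≤ dist u v - θ} with hSdef
  have hbdd : ∀ u v, BddAbove (S u v) := by
    intro u v
    refine ⟨dist u v, fun θ hθ => ?_⟩
    obtain ⟨hθ0, u', hu', v', hv', _, _, hd⟩ := hθ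
    have := dist_nonneg (x := u') (y := v')
    linarith
  have stepEx : ∀ p : X × X, ∃ q : X × X,
      ((S p.1 p.2).Nonempty →
        q.1 ∈ A ∧ q.2 ∈ B ∧ ∃ θ : ℝ, sSup (S p.1 p.2) / 2 < θ ∧ 0 < θ ∧
          dist p.1 q.1 ≤ 2 * M * θ ∧ dist p.2 q.2 ≤ 2 * M * θ ∧
          dist q.1 q.2 ≤ dist p.1 p.2 - θ) ∧
      (¬ (S p.1 p.2).Nonempty → q = p) := by
    intro p
    by_cases h : (S p.1 p.2).Nonempty
    · have hpos : 0 < sSup (S p.1 p.2) := by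
        obtain ⟨θ₀, hθ₀⟩ := h
        exact lt_of_lt_of_le hθ₀.1 (le_csSup (hbdd _ _) hθ₀)
      obtain ⟨θ, hθS, hθgt⟩ := exists_lt_of_lt_csSup h (half_lt_self hpos)
      obtain ⟨hθ0, u', hu', v', hv', h1, h2, h3⟩ := hθS
      exact ⟨(u', v'), fun _ => ⟨hu', hv', θ, hθgt, hθ0, h1, h2, h3⟩, fun hn => absurd h hn⟩
    · exact ⟨p, fun hn => absurd hn h, fun _ => rfl⟩
  choose step hstep using stepEx
  set u : ℕ → X × X := fun n => step^[n] (a, b) with hu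
  have hu0 : u 0 = (a, b) := rfl
  have hsucc : ∀ n, u (n + 1) = step (u n) := fun n =>
    Function.iterate_succ_apply' step n (a, b)
  set g : ℕ → ℝ := fun n => dist (u n).1 (u n).2 with hg
  have hmem : ∀ n, (u n).1 ∈ A ∧ (u n).2 ∈ B := by
    intro n
    induction n with
    | zero => exact ⟨ha, hb⟩
    | succ n ih =>
      rw [hsucc]
      by_cases h : (S (u n).1 (u n).2).Nonempty
      · obtain ⟨h1, h2, _⟩ := (hstep (u n)).1 h
        exact ⟨h1, h2⟩
      · rw [(hstep (u n)).2 h]; exact ih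
  have hdec : ∀ n, g (n + 1) ≤ g n ∧
      dist (u n).1 (u (n + 1)).1 ≤ 2 * M * (g n - g (n + 1)) ∧
      dist (u n).2 (u (n + 1)).2 ≤ 2 * M * (g n - g (n + 1)) := by
    intro n
    by_cases h : (S (u n).1 (u n).2).Nonempty
    · obtain ⟨_, _, θ, hθgt, hθ0, h1, h2, h3⟩ := (hstep (u n)).1 h
      have hgn : g (n + 1) = dist (step (u n)).1 (step (u n)).2 := by simp only [hg, hsucc]
      have h1' : dist (u n).1 (u (n+1)).1 ≤ 2 * M * θ := by rw [hsucc]; exact h1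
      have h2' : dist (u n).2 (u (n+1)).2 ≤ 2 * M * θ := by rw [hsucc]; exact h2
      have h3' : g (n + 1) ≤ g n - θ := by rw [hgn]; exact h3
      refine ⟨by linarith, ?_, ?_⟩
      · calc dist (u n).1 (u (n+1)).1 ≤ 2 * M * θ := h1'
          _ ≤ 2 * M * (g n - g (n + 1)) := by nlinarith
      · calc dist (u n).2 (u (n+1)).2 ≤ 2 * M * θ := h2'
          _ ≤ 2 * M * (g n - g (n + 1)) := by nlinarith
    · have heq : u (n + 1) = u n := by rw [hsucc, (hstep (u n)).2 h]
      have hgeq : g (n + 1) = g n := by simp only [hg, heq]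
      rw [heq, hgeq]
      simp
  have hant : Antitone g := antitone_nat_of_succ_le fun n => (hdec n).1
  have hgnn : ∀ n, 0 ≤ g n := fun n => dist_nonneg
  have htel : ∀ m n, m ≤ n → dist (u m).1 (u n).1 ≤ 2 * M * (g m - g n) ∧
      dist (u m).2 (u n).2 ≤ 2 * M * (g m - g n) := by
    intro m n hmn
    induction n, hmn using Nat.le_induction with
    | base => simp
    | succ n hmn ih =>
      obtain ⟨_, s1, s2⟩ := hdec n
      constructor
      · calc dist (u m).1 (u (n+1)).1 ≤ dist (u m).1 (u n).1 + dist (u n).1 (u (n+1)).1 :=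
            dist_triangle _ _ _
          _ ≤ 2 * M * (g m - g n) + 2 * M * (g n - g (n + 1)) := add_le_add ih.1 s1
          _ = 2 * M * (g m - g (n + 1)) := by ring
      · calc dist (u m).2 (u (n+1)).2 ≤ dist (u m).2 (u n).2 + dist (u n).2 (u (n+1)).2 :=
            dist_triangle _ _ _
          _ ≤ 2 * M * (g m - g n) + 2 * M * (g n - g (n + 1)) := add_le_add ih.2 s2
          _ = 2 * M * (g m - g (n + 1)) := by ring
  set L : ℝ := ⨅ n, g n with hL
  have hbddb : BddBelow (Set.range g) := ⟨0, by rintro _ ⟨n, rfl⟩; exact hgnn n⟩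
  have hgtend : Tendsto g atTop (𝓝 L) := tendsto_atTop_ciInf hant hbddb
  have hLle : ∀ n, L ≤ g n := fun n => ciInf_le hbddb n
  have hL0 : 0 ≤ L := le_ciInf hgnn
  have hcau : ∀ (f : ℕ → X), (∀ m n, m ≤ n → dist (f m) (f n) ≤ 2 * M * (g m - g n)) →
      CauchySeq f := by
    intro f hf
    apply cauchySeq_of_le_tendsto_0 (b := fun n => 2 * M * (g n - L))
    · intro n m N hn hm
      rcases le_total n m with h | h
      · calc dist (f n) (f m) ≤ 2 * M * (g n - g m) := hf n m h
          _ ≤ 2 * M * (g N - L) := by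
            have := hant hn; have := hLle m; nlinarith
      · rw [dist_comm]
        calc dist (f m) (f n) ≤ 2 * M * (g m - g n) := hf m n h
          _ ≤ 2 * M * (g N - L) := by
            have := hant hm; have := hLle n; nlinarith
    · have : Tendsto (fun n => 2 * M * (g n - L)) atTop (𝓝 (2 * M * (L - L))) :=
        ((hgtend.sub tendsto_const_nhds).const_mul _)
      simpa using this
  obtain ⟨zA, hzA⟩ := cauchySeq_tendsto_of_complete (hcau _ fun m n h => (htel m n h).1)
  obtain ⟨zB, hzB⟩ := cauchySeq_tendsto_of_complete (hcau _ fun m n h => (htel m n h).2)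
  have hzAA : zA ∈ A := hA.mem_of_tendsto hzA (Eventually.of_forall fun n => (hmem n).1)
  have hzBB : zB ∈ B := hB.mem_of_tendsto hzB (Eventually.of_forall fun n => (hmem n).2)
  have hdistz : dist zA zB = L := tendsto_nhds_unique (hzA.dist hzB) hgtend
  have hg0 : g 0 = dist a b := by simp only [hg, hu0]
  have hmoveA : dist a zA ≤ 2 * M * (g 0 - L) := by
    refine le_of_tendsto (tendsto_const_nhds.dist hzA) (Eventually.of_forall fun n => ?_)
    have := (htel 0 n (Nat.zero_le n)).1
    rw [hu0] at this
    have := hLle n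
    nlinarith [(htel 0 n (Nat.zero_le n)).1]
  have hmoveB : dist b zB ≤ 2 * M * (g 0 - L) := by
    refine le_of_tendsto (tendsto_const_nhds.dist hzB) (Eventually.of_forall fun n => ?_)
    have h1 := (htel 0 n (Nat.zero_le n)).2
    rw [hu0] at h1
    have := hLle n
    nlinarith
  have hballA : zA ∈ Metric.closedBall xbar δ := by
    rw [Metric.mem_closedBall, dist_comm]
    calc dist xbar zA ≤ dist xbar a + dist a zA := dist_triangle _ _ _
      _ ≤ dist xbar a + 2 * M * (g 0 - L) := by linarith
      _ ≤ δ := by rw [hg0]; nlinarith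
  have hballB : zB ∈ Metric.closedBall xbar δ := by
    rw [Metric.mem_closedBall, dist_comm]
    calc dist xbar zB ≤ dist xbar b + dist b zB := dist_triangle _ _ _
      _ ≤ dist xbar b + 2 * M * (g 0 - L) := by linarith
      _ ≤ δ := by rw [hg0]; nlinarith
  have hLzero : L = 0 := by
    by_contra hne
    have hLpos : 0 < L := lt_of_le_of_ne hL0 (Ne.symm hne)
    have hzne : zA ≠ zB := by
      intro h
      rw [h, dist_self] at hdistz
      exact hne hdistz.symm
    obtain ⟨θ, hθ, zA', hzA', zB', hzB', e1, e2, e3⟩ :=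
      hT.2.2 zA ⟨hzAA, hballA⟩ zB ⟨hzBB, hballB⟩ hzne
    have hMθ : 0 < M * θ := by positivity
    have hdA : Tendsto (fun n => dist (u n).1 zA) atTop (𝓝 0) := by
      simpa using hzA.dist (tendsto_const_nhds (x := zA))
    have hdB : Tendsto (fun n => dist (u n).2 zB) atTop (𝓝 0) := by
      simpa using hzB.dist (tendsto_const_nhds (x := zB))
    have ev1 : ∀ᶠ n in atTop, dist (u n).1 zA < M * θ :=
      hdA.eventually (eventually_lt_nhds hMθ)
    have ev2 : ∀ᶠ n in atTop, dist (u n).2 zB < M * θ :=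
      hdB.eventually (eventually_lt_nhds hMθ)
    have hgsucc : Tendsto (fun n => g n - g (n + 1)) atTop (𝓝 (L - L)) :=
      hgtend.sub (hgtend.comp (tendsto_add_atTop_nat 1))
    have ev3 : ∀ᶠ n in atTop, g n - g (n + 1) < θ / 2 := by
      have : (L - L) < θ / 2 := by linarith
      exact hgsucc.eventually (eventually_lt_nhds this)
    obtain ⟨n, h1, h2, h3⟩ := (ev1.and (ev2.and ev3)).exists
    have hθS : θ ∈ S (u n).1 (u n).2 := by
      refine ⟨hθ, zA', hzA', zB', hzB', ?_, ?_, ?_⟩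
      · calc dist (u n).1 zA' ≤ dist (u n).1 zA + dist zA zA' := dist_triangle _ _ _
          _ ≤ M * θ + θ * M := by linarith
          _ = 2 * M * θ := by ring
      · calc dist (u n).2 zB' ≤ dist (u n).2 zB + dist zB zB' := dist_triangle _ _ _
          _ ≤ M * θ + θ * M := by linarith
          _ = 2 * M * θ := by ring
      · have := hLle n
        rw [hdistz] at e3
        linarith
    have hSne : (S (u n).1 (u n).2).Nonempty := ⟨θ, hθS⟩
    obtain ⟨_, _, θ', hθ'gt, hθ'0, _, _, h3'⟩ := (hstep (u n)).1 hSne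
    have hsup : θ ≤ sSup (S (u n).1 (u n).2) := le_csSup (hbdd _ _) hθS
    have hgn1 : g (n + 1) ≤ g n - θ' := by
      have : g (n + 1) = dist (step (u n)).1 (step (u n)).2 := by simp only [hg, hsucc]
      rw [this]
      exact h3'
    linarith
  refine ⟨zA, ⟨hzAA, ?_⟩, ?_⟩
  · have : zA = zB := by
      rw [← dist_eq_zero, hdistz, hLzero]
    rw [this]; exact hzBB
  · rw [← hg0]
    calc dist a zA ≤ 2 * M * (g 0 - L) := hmoveA
      _ = 2 * M * g 0 := by rw [hLzero]; ring

open Filter in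
theorem stmt1 {X : Type*} [MetricSpace X] [CompleteSpace X]
    {A B : Set X} (hA : IsClosed A) (hB : IsClosed B) (xbar : X)
    (hT : ∃ δ > 0, ∃ M > 0, PropT A B xbar δ M) :
    ∃ K > 0, ∃ δ > 0, ∀ x ∈ Metric.ball xbar δ,
      EMetric.infEdist x (A ∩ B) ≤
        ENNReal.ofReal K * (EMetric.infEdist x A + EMetric.infEdist x B) := by
  obtain ⟨δ, hδ, M, hM, hT⟩ := hT
  obtain ⟨r, hr_def⟩ : ∃ r : ℝ, r = δ / (2 * (1 + 2 * M)) := ⟨_, rfl⟩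
  have hr : 0 < r := by rw [hr_def]; positivity
  have hδr : δ = (2 + 4 * M) * r := by rw [hr_def]; field_simp; ring
  obtain ⟨δ', hδ'_def⟩ : ∃ d : ℝ, d = r / (8 * (1 + 2 * M)) := ⟨_, rfl⟩
  have hδ' : 0 < δ' := by rw [hδ'_def]; positivity
  have hprod : 8 * δ' + 16 * (M * δ') = r := by rw [hδ'_def]; field_simp; ring
  have hMδ' : 0 ≤ M * δ' := mul_nonneg hM.le hδ'.le
  have hδ'r : 3 * δ' + 8 * (M * δ') ≤ r := by linarith
  have hδ'le : δ' ≤ r := by linarith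
  refine ⟨2 + 6 * M, by linarith, δ', hδ', fun x hx => ?_⟩
  rw [Metric.mem_ball] at hx
  obtain ⟨a0, ha0A, ha0ball⟩ := hT.1
  obtain ⟨b0, hb0B, hb0ball⟩ := hT.2.1
  have hAne : A.Nonempty := ⟨a0, ha0A⟩
  have hBne : B.Nonempty := ⟨b0, hb0B⟩
  rw [Metric.mem_ball, ← hr_def] at ha0ball
  rw [Metric.mem_ball, ← hr_def] at hb0ball
  obtain ⟨dA, hdA_def⟩ : ∃ d : ℝ, d = Metric.infDist x A := ⟨_, rfl⟩
  obtain ⟨dB, hdB_def⟩ : ∃ d : ℝ, d = Metric.infDist x B := ⟨_, rfl⟩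
  have hdA0 : 0 ≤ dA := hdA_def ▸ Metric.infDist_nonneg
  have hdB0 : 0 ≤ dB := hdB_def ▸ Metric.infDist_nonneg
  have hdAlt : dA < δ' + r := by
    calc dA ≤ dist x a0 := hdA_def ▸ Metric.infDist_le_dist_of_mem ha0A
      _ ≤ dist x xbar + dist a0 xbar := dist_triangle_right _ _ _
      _ < δ' + r := add_lt_add hx ha0ball
  have hdBlt : dB < δ' + r := by
    calc dB ≤ dist x b0 := hdB_def ▸ Metric.infDist_le_dist_of_mem hb0B
      _ ≤ dist x xbar + dist b0 xbar := dist_triangle_right _ _ _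
      _ < δ' + r := add_lt_add hx hb0ball
  by_cases h0 : dA + dB = 0
  · have hxA : x ∈ A := by
      rw [← hA.closure_eq, Metric.mem_closure_iff_infDist_zero hAne]
      linarith
    have hxB : x ∈ B := by
      rw [← hB.closure_eq, Metric.mem_closure_iff_infDist_zero hBne]
      linarith
    rw [show EMetric.infEdist x (A ∩ B) = 0 from EMetric.infEdist_zero_of_mem (Set.mem_inter hxA hxB)]
    exact zero_le
  · have hpos : 0 < dA + dB := lt_of_le_of_ne (by linarith) (Ne.symm h0)
    obtain ⟨η, hη_def⟩ : ∃ e : ℝ, e = min δ' (dA + dB) := ⟨_, rfl⟩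
    have hη : 0 < η := hη_def ▸ lt_min hδ' hpos
    have hηδ' : η ≤ δ' := hη_def ▸ min_le_left _ _
    have hηd : η ≤ dA + dB := hη_def ▸ min_le_right _ _
    obtain ⟨a, haA, hax⟩ := (Metric.infDist_lt_iff hAne).mp
      (show Metric.infDist x A < dA + η by rw [← hdA_def]; linarith)
    obtain ⟨b, hbB, hbx⟩ := (Metric.infDist_lt_iff hBne).mp
      (show Metric.infDist x B < dB + η by rw [← hdB_def]; linarith)
    have hab : dist a b < dA + dB + 2 * η := by
      calc dist a b ≤ dist a x + dist x b := dist_triangle _ _ _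
        _ = dist x a + dist x b := by rw [dist_comm a x]
        _ < (dA + η) + (dB + η) := add_lt_add hax hbx
        _ = dA + dB + 2 * η := by ring
    have habd : dist a b < 4 * δ' + 2 * r := by
      calc dist a b < dA + dB + 2 * η := hab
        _ < (δ' + r) + (δ' + r) + 2 * δ' := by linarith
        _ = 4 * δ' + 2 * r := by ring
    have hxa : dist xbar a < 3 * δ' + r := by
      calc dist xbar a ≤ dist xbar x + dist x a := dist_triangle _ _ _
        _ < δ' + (dA + η) := by rw [dist_comm]; exact add_lt_add hx hax
        _ < δ' + ((δ' + r) + δ') := by linarith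
        _ = 3 * δ' + r := by ring
    have hxb : dist xbar b < 3 * δ' + r := by
      calc dist xbar b ≤ dist xbar x + dist x b := dist_triangle _ _ _
        _ < δ' + (dB + η) := by rw [dist_comm]; exact add_lt_add hx hbx
        _ < δ' + ((δ' + r) + δ') := by linarith
        _ = 3 * δ' + r := by ring
    have h2M : (0:ℝ) ≤ 2 * M := by linarith
    have h1 : 2 * M * dist a b ≤ 2 * M * (4 * δ' + 2 * r) :=
      mul_le_mul_of_nonneg_left habd.le h2M
    have e1 : 2 * M * (4 * δ' + 2 * r) = 8 * (M * δ') + 4 * (M * r) := by ring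
    have e2 : (2 + 4 * M) * r = 2 * r + 4 * (M * r) := by ring
    have hca : dist xbar a + 2 * M * dist a b ≤ δ := by
      rw [hδr, e2]; rw [e1] at h1; linarith
    have hcb : dist xbar b + 2 * M * dist a b ≤ δ := by
      rw [hδr, e2]; rw [e1] at h1; linarith
    obtain ⟨z, hz, hdz⟩ := core_lemma hA hB xbar hδ hM hT haA hbB hca hcb
    have hxz : dist x z ≤ (2 + 6 * M) * (dA + dB) := by
      have h1' : 2 * M * dist a b ≤ 2 * M * (dA + dB + 2 * η) :=
        mul_le_mul_of_nonneg_left hab.le h2M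
      have h2' : M * η ≤ M * (dA + dB) := mul_le_mul_of_nonneg_left hηd hM.le
      have e3 : 2 * M * (dA + dB + 2 * η) = 2 * (M * (dA + dB)) + 4 * (M * η) := by ring
      have e4 : (2 + 6 * M) * (dA + dB) = 2 * (dA + dB) + 6 * (M * (dA + dB)) := by ring
      have hMd : 0 ≤ M * (dA + dB) := mul_nonneg hM.le hpos.le
      calc dist x z ≤ dist x a + dist a z := dist_triangle _ _ _
        _ ≤ (dA + η) + 2 * M * (dA + dB + 2 * η) := by linarith
        _ ≤ (2 + 6 * M) * (dA + dB) := by rw [e4]; rw [e3] at h1'; linarith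
    calc EMetric.infEdist x (A ∩ B) ≤ edist x z := EMetric.infEdist_le_edist_of_mem hz
      _ = ENNReal.ofReal (dist x z) := edist_dist _ _
      _ ≤ ENNReal.ofReal ((2 + 6 * M) * (dA + dB)) := ENNReal.ofReal_le_ofReal hxz
      _ = ENNReal.ofReal (2 + 6 * M) * ENNReal.ofReal (dA + dB) :=
          ENNReal.ofReal_mul (by linarith)
      _ = ENNReal.ofReal (2 + 6 * M) * (ENNReal.ofReal dA + ENNReal.ofReal dB) := by
          rw [ENNReal.ofReal_add hdA0 hdB0]
      _ ≤ ENNReal.ofReal (2 + 6 * M) * (EMetric.infEdist x A + EMetric.infEdist x B) := by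
          gcongr
          · rw [hdA_def, Metric.infDist]; exact ENNReal.ofReal_toReal_le
          · rw [hdB_def, Metric.infDist]; exact ENNReal.ofReal_toReal_le
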